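/- For every positive integer m, Σ_{k=1}^{Ω(m)} (−1)^k α_k(m) equals (−1)^{Ω(m)} if m is squarefree and m > 1, and equals 0 otherwise (in particular it is 0 for m = 1, where the sum is empty). -/

import Mathlib

/-- `alpha k m` is the number of `k`-tuples `(m₁, …, m_k)` of integers, each `≥ 2`,
whose product is `m`. -/
noncomputable def alpha (k m : ℕ) : ℕ :=
  Nat.card {f : Fin k → ℕ // (∀ i, 2 ≤ f i) ∧ ∏ i, f i = m}

/-- `Omega m` is the number of prime factors of `m` counted with multiplicity. -/
def Omega (m : ℕ) : ℕ := m.primeFactorsList.length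

open ArithmeticFunction
open scoped ArithmeticFunction.Omega ArithmeticFunction.Moebius ArithmeticFunction.zeta

lemma alphaFinite (k m : ℕ) : Finite {f : Fin k → ℕ // (∀ i, 2 ≤ f i) ∧ ∏ i, f i = m} := by
  rcases Nat.eq_zero_or_pos m with rfl | hm
  · have : IsEmpty {f : Fin k → ℕ // (∀ i, 2 ≤ f i) ∧ ∏ i, f i = 0} := by
      refine ⟨fun x => ?_⟩
      obtain ⟨f, h2, hp⟩ := x
      obtain ⟨i, -, hi⟩ := Finset.prod_eq_zero_iff.mp hp
      exact absurd (h2 i) (by omega)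
    infer_instance
  · have hfin : Set.Finite {f : Fin k → ℕ | (∀ i, 2 ≤ f i) ∧ ∏ i, f i = m} := by
      apply Set.Finite.subset (Set.Finite.pi (fun _ : Fin k => Set.finite_Icc 0 m))
      intro f hf
      simp only [Set.mem_pi, Set.mem_univ, Set.mem_Icc, forall_true_left] at *
      intro i
      have : f i ∣ m := hf.2 ▸ Finset.dvd_prod_of_mem f (Finset.mem_univ i)
      exact ⟨Nat.zero_le _, Nat.le_of_dvd hm this⟩
    exact hfin.to_subtype

lemma alpha_zero (m : ℕ) : alpha 0 m = if m = 1 then 1 else 0 := by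
  split_ifs with h
  · subst h
    have : Unique {f : Fin 0 → ℕ // (∀ i, 2 ≤ f i) ∧ ∏ i, f i = 1} := by
      refine ⟨⟨⟨finZeroElim, fun i => i.elim0, by simp⟩⟩, ?_⟩
      rintro ⟨f, hf⟩
      ext i
      exact i.elim0
    exact Nat.card_unique
  · have : IsEmpty {f : Fin 0 → ℕ // (∀ i, 2 ≤ f i) ∧ ∏ i, f i = m} := by
      refine ⟨fun x => h ?_⟩
      obtain ⟨f, -, hp⟩ := x
      simpa using hp.symm
    exact Nat.card_of_isEmpty

lemma Omega_eq (m : ℕ) : Omega m = Ω m := cardFactors_apply.symm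

lemma Omega_pos {m : ℕ} (hm : 2 ≤ m) : 1 ≤ Ω m := by
  obtain ⟨p, hp, hdvd⟩ := Nat.exists_prime_and_dvd (by omega : m ≠ 1)
  have hmem : p ∈ m.primeFactorsList :=
    (Nat.mem_primeFactorsList (by omega)).mpr ⟨hp, hdvd⟩
  have := List.length_pos_iff.mpr (List.ne_nil_of_mem hmem)
  rw [cardFactors_apply]
  omega

lemma cardFactors_finset_prod {ι : Type*} (s : Finset ι) (f : ι → ℕ)
    (h : ∀ i ∈ s, f i ≠ 0) : Ω (∏ i ∈ s, f i) = ∑ i ∈ s, Ω (f i) := by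
  classical
  induction s using Finset.induction_on with
  | empty => simp
  | @insert a s ha ih =>
    rw [Finset.prod_insert ha, Finset.sum_insert ha,
      cardFactors_mul (h a (Finset.mem_insert_self a s))
        (Finset.prod_ne_zero_iff.mpr fun i hi => h i (Finset.mem_insert_of_mem hi)),
      ih fun i hi => h i (Finset.mem_insert_of_mem hi)]

lemma alpha_eq_zero_of_lt {k m : ℕ} (h : Omega m < k) : alpha k m = 0 := by
  have : IsEmpty {f : Fin k → ℕ // (∀ i, 2 ≤ f i) ∧ ∏ i, f i = m} := by
    refine ⟨fun x => ?_⟩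
    obtain ⟨f, h2, hp⟩ := x
    have hΩ : Ω m = ∑ i, Ω (f i) := by
      rw [← hp]
      exact cardFactors_finset_prod _ _ fun i _ => by have := h2 i; omega
    have hge : ∀ i, 1 ≤ Ω (f i) := fun i => Omega_pos (h2 i)
    have hk : (k : ℕ) ≤ ∑ i : Fin k, Ω (f i) := by
      calc (k : ℕ) = ∑ _i : Fin k, 1 := by simp
      _ ≤ _ := Finset.sum_le_sum fun i _ => hge i
    rw [Omega_eq] at h
    omega
  exact Nat.card_of_isEmpty

lemma Omega_lt_of_properDivisor {m d : ℕ} (hm : 0 < m) (hd : d ∈ m.properDivisors) :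
    Omega d < Omega m := by
  obtain ⟨hdvd, hlt⟩ := Nat.mem_properDivisors.mp hd
  obtain ⟨e, rfl⟩ := hdvd
  have hd0 : d ≠ 0 := by rintro rfl; simp at hm
  have he0 : e ≠ 0 := by rintro rfl; simp at hm
  have he1 : 2 ≤ e := by
    rcases Nat.lt_or_ge e 2 with h | h
    · interval_cases e <;> omega
    · exact h
  rw [Omega_eq, Omega_eq, cardFactors_mul hd0 he0]
  have := Omega_pos he1
  omega

lemma two_le_div_of_properDivisor {m d : ℕ} (hm : 0 < m) (hd : d ∈ m.properDivisors) :
    2 ≤ m / d := by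
  obtain ⟨hdvd, hlt⟩ := Nat.mem_properDivisors.mp hd
  have hdpos : 0 < d := Nat.pos_of_dvd_of_pos hdvd hm
  have hmd : d * (m / d) = m := Nat.mul_div_cancel' hdvd
  rcases Nat.lt_or_ge (m / d) 2 with h | h
  · interval_cases h' : (m / d) <;> omega
  · exact h

noncomputable def fiber_equiv (j m : ℕ) (hm0 : 0 < m) (d : ℕ) (hd : d ∈ m.properDivisors) :
    {x : {f : Fin (j + 1) → ℕ // (∀ i, 2 ≤ f i) ∧ ∏ i, f i = m} //
        (∏ i : Fin j, x.1 i.castSucc) = d} ≃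
      {g : Fin j → ℕ // (∀ i, 2 ≤ g i) ∧ ∏ i, g i = d} := by
  have hdvd : d ∣ m := (Nat.mem_properDivisors.mp hd).1
  have hdpos : 0 < d := Nat.pos_of_dvd_of_pos hdvd hm0
  have he2 : 2 ≤ m / d := two_le_div_of_properDivisor hm0 hd
  have hde : d * (m / d) = m := Nat.mul_div_cancel' hdvd
  refine
    { toFun := fun x => ⟨fun i => x.1.1 i.castSucc, fun i => x.1.2.1 _, x.2⟩
      invFun := fun g => ⟨⟨Fin.snoc g.1 (m / d), ?_, ?_⟩, ?_⟩
      left_inv := ?_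
      right_inv := ?_ }
  · intro i
    induction i using Fin.lastCases with
    | last => simpa using he2
    | cast i => simpa using g.2.1 i
  · rw [Fin.prod_univ_castSucc]
    simp only [Fin.snoc_castSucc, Fin.snoc_last]
    rw [g.2.2, hde]
  · show (∏ i : Fin j, (Fin.snoc g.1 (m / d) : Fin (j + 1) → ℕ) i.castSucc) = d
    simp only [Fin.snoc_castSucc]
    exact g.2.2
  · intro x
    apply Subtype.ext
    apply Subtype.ext
    funext i
    induction i using Fin.lastCases with
    | last =>
      show (Fin.snoc (fun i => x.1.1 i.castSucc) (m / d) : Fin (j + 1) → ℕ) (Fin.last j) = x.1.1 (Fin.last j)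
      rw [Fin.snoc_last]
      have hval : (∏ i : Fin j, x.1.1 i.castSucc) = d := x.2
      have hprod : (∏ i : Fin j, x.1.1 i.castSucc) * x.1.1 (Fin.last j) = m := by
        rw [← Fin.prod_univ_castSucc]; exact x.1.2.2
      have h2 : d * (m / d) = d * x.1.1 (Fin.last j) := by
        calc d * (m / d) = m := hde
        _ = (∏ i : Fin j, x.1.1 i.castSucc) * x.1.1 (Fin.last j) := hprod.symm
        _ = d * x.1.1 (Fin.last j) := by rw [hval]
      exact Nat.eq_of_mul_eq_mul_left hdpos h2
    | cast i =>
      show (Fin.snoc (fun i => x.1.1 i.castSucc) (m / d) : Fin (j + 1) → ℕ) i.castSucc = x.1.1 i.castSucc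
      rw [Fin.snoc_castSucc]
  · intro g
    apply Subtype.ext
    funext i
    show (Fin.snoc g.1 (m / d) : Fin (j + 1) → ℕ) i.castSucc = g.1 i
    rw [Fin.snoc_castSucc]

lemma alpha_succ (j m : ℕ) (hm : 2 ≤ m) :
    alpha (j + 1) m = ∑ d ∈ m.properDivisors, alpha j d := by
  classical
  have hm0 : 0 < m := by omega
  set T := {f : Fin (j + 1) → ℕ // (∀ i, 2 ≤ f i) ∧ ∏ i, f i = m} with hT
  let F : T → {d // d ∈ m.properDivisors} := fun x =>
    ⟨∏ i : Fin j, x.1 i.castSucc, by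
      have hprod : (∏ i : Fin j, x.1 i.castSucc) * x.1 (Fin.last j) = m := by
        rw [← Fin.prod_univ_castSucc]; exact x.2.2
      have hpos : 0 < ∏ i : Fin j, x.1 i.castSucc :=
        Finset.prod_pos fun i _ => by have := x.2.1 i.castSucc; omega
      refine Nat.mem_properDivisors.mpr ⟨⟨x.1 (Fin.last j), hprod.symm⟩, ?_⟩
      have h2 : 2 ≤ x.1 (Fin.last j) := x.2.1 _
      calc (∏ i : Fin j, x.1 i.castSucc) < (∏ i : Fin j, x.1 i.castSucc) * 2 := by omega
      _ ≤ (∏ i : Fin j, x.1 i.castSucc) * x.1 (Fin.last j) := Nat.mul_le_mul_left _ h2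
      _ = m := hprod⟩
  have fibEq : ∀ d : {d // d ∈ m.properDivisors},
      {x : T // F x = d} ≃ {g : Fin j → ℕ // (∀ i, 2 ≤ g i) ∧ ∏ i, g i = (d : ℕ)} := by
    intro d
    refine Equiv.trans (Equiv.subtypeEquivRight fun x => ?_) (fiber_equiv j m hm0 d d.2)
    constructor
    · intro h; exact congrArg Subtype.val h
    · intro h; exact Subtype.ext h
  haveI hTfin : Finite T := alphaFinite _ _
  haveI : ∀ d : {d // d ∈ m.properDivisors}, Finite {x : T // F x = d} :=
    fun d => Subtype.finite
  letI : Fintype T := Fintype.ofFinite T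
  letI : ∀ d : {d // d ∈ m.properDivisors}, Fintype {x : T // F x = d} :=
    fun d => Fintype.ofFinite _
  have h1 : alpha (j + 1) m = Nat.card T := rfl
  rw [h1, Nat.card_congr (Equiv.sigmaFiberEquiv F).symm]
  rw [Nat.card_eq_fintype_card, Fintype.card_sigma]
  have h2 : ∀ d : {d // d ∈ m.properDivisors},
      Fintype.card {x : T // F x = d} = alpha j (d : ℕ) := by
    intro d
    rw [← Nat.card_eq_fintype_card, Nat.card_congr (fibEq d)]
    rfl
  simp_rw [h2]
  exact Finset.sum_coe_sort m.properDivisors (fun d => alpha j d)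

lemma sum_Icc_one (n : ℕ) (f : ℕ → ℤ) :
    ∑ k ∈ Finset.Icc 1 n, f k = ∑ j ∈ Finset.range n, f (j + 1) := by
  induction n with
  | zero => simp
  | succ n ih =>
    rw [Finset.sum_Icc_succ_top (by omega), ih, Finset.sum_range_succ]

lemma sum_divisors_moebius {m : ℕ} (hm : 2 ≤ m) :
    ∑ d ∈ m.properDivisors, (μ d : ℤ) = -μ m := by
  have h0 : (∑ d ∈ m.divisors, (μ d : ℤ)) = 0 := by
    have := congrArg (fun f : ArithmeticFunction ℤ => f m) moebius_mul_coe_zeta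
    simp only [coe_mul_zeta_apply, one_apply] at this
    rw [this, if_neg (by omega)]
  rw [← Nat.cons_self_properDivisors (by omega : m ≠ 0), Finset.sum_cons] at h0
  omega

lemma main_lemma (m : ℕ) (hm : 0 < m) :
    (∑ k ∈ Finset.Icc 1 (Omega m), (-1 : ℤ) ^ k * (alpha k m : ℤ))
      = μ m - (if m = 1 then 1 else 0) := by
  induction m using Nat.strong_induction_on with
  | _ m ih =>
  rcases Nat.lt_or_ge m 2 with h1 | h2
  · have : m = 1 := by omega
    subst this
    simp [Omega]
  · have hne1 : m ≠ 1 := by omega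
    set n := Omega m with hn
    have hn1 : 1 ≤ n := by rw [hn, Omega_eq]; exact Omega_pos h2
    have inner : ∀ d ∈ m.properDivisors,
        (∑ j ∈ Finset.range n, (-1 : ℤ) ^ j * (alpha j d : ℤ)) = μ d := by
      intro d hd
      have hdpos : 0 < d := Nat.pos_of_mem_properDivisors hd
      have hdlt : d < m := (Nat.mem_properDivisors.mp hd).2
      have hΩ : Omega d + 1 ≤ n := Omega_lt_of_properDivisor hm hd
      have hsub : (∑ j ∈ Finset.range n, (-1 : ℤ) ^ j * (alpha j d : ℤ))
          = ∑ j ∈ Finset.range (Omega d + 1), (-1 : ℤ) ^ j * (alpha j d : ℤ) := by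
        refine (Finset.sum_subset (Finset.range_subset_range.mpr hΩ) ?_).symm
        intro j hj hj2
        simp only [Finset.mem_range] at hj hj2
        rw [alpha_eq_zero_of_lt (by omega)]
        simp
      rw [hsub, Finset.sum_range_succ']
      have : (∑ i ∈ Finset.range (Omega d), (-1 : ℤ) ^ (i + 1) * (alpha (i + 1) d : ℤ))
          = μ d - (if d = 1 then 1 else 0) := by
        have hih := ih d hdlt hdpos
        rw [sum_Icc_one] at hih
        exact hih
      rw [this, alpha_zero]
      split_ifs with h <;> simp
    calc (∑ k ∈ Finset.Icc 1 n, (-1 : ℤ) ^ k * (alpha k m : ℤ))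
        = ∑ j ∈ Finset.range n, (-1 : ℤ) ^ (j + 1) * (alpha (j + 1) m : ℤ) :=
          sum_Icc_one n _
      _ = ∑ j ∈ Finset.range n, (-1 : ℤ) ^ (j + 1)
            * ∑ d ∈ m.properDivisors, (alpha j d : ℤ) := by
          refine Finset.sum_congr rfl fun j _ => ?_
          rw [alpha_succ j m h2]
          push_cast
          ring
      _ = ∑ j ∈ Finset.range n, ∑ d ∈ m.properDivisors,
            (-1 : ℤ) ^ (j + 1) * (alpha j d : ℤ) := by
          simp_rw [Finset.mul_sum]
      _ = ∑ d ∈ m.properDivisors, ∑ j ∈ Finset.range n,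
            (-1 : ℤ) ^ (j + 1) * (alpha j d : ℤ) := Finset.sum_comm
      _ = ∑ d ∈ m.properDivisors,
            -(∑ j ∈ Finset.range n, (-1 : ℤ) ^ j * (alpha j d : ℤ)) := by
          refine Finset.sum_congr rfl fun d _ => ?_
          rw [← Finset.sum_neg_distrib]
          refine Finset.sum_congr rfl fun j _ => ?_
          ring
      _ = ∑ d ∈ m.properDivisors, -(μ d : ℤ) := by
          refine Finset.sum_congr rfl fun d hd => ?_
          rw [inner d hd]
      _ = -(∑ d ∈ m.properDivisors, (μ d : ℤ)) := by rw [Finset.sum_neg_distrib]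
      _ = μ m - (if m = 1 then 1 else 0) := by
          rw [sum_divisors_moebius h2, if_neg hne1]
          ring

theorem stmt7 (m : ℕ) (hm : 0 < m) :
    ∑ k ∈ Finset.Icc 1 (Omega m), (-1 : ℤ) ^ k * (alpha k m : ℤ)
      = if Squarefree m ∧ 1 < m then (-1 : ℤ) ^ (Omega m) else 0 := by
  rw [main_lemma m hm]
  rcases Nat.lt_or_ge m 2 with h1 | h2
  · have : m = 1 := by omega
    subst this
    simp
  · rw [if_neg (by omega : ¬ m = 1), sub_zero]
    by_cases hsq : Squarefree m
    · rw [if_pos ⟨hsq, by omega⟩, moebius_apply_of_squarefree hsq, Omega_eq]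
    · rw [if_neg (by tauto), moebius_eq_zero_of_not_squarefree hsq]
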